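/- Let A₁ = (n₁, Σ, M₁, α₁, η₁) be a PA. A PA A₂ = (n₂, Σ, M₂, α₂, η₂) is equivalent to A₁ if and only if there exist matrices M̃(a) ∈ ℝ^{(n₁+n₂)×(n₁+n₂)} for each a ∈ Σ and a matrix F ∈ ℝ^{(n₁+n₂)×(n₁+n₂)} such that: the first row of F equals the concatenated vector (α₁, α₂); F · (η₁ᵀ, −η₂ᵀ)ᵀ = (0,…,0)ᵀ; and F · diag(M₁(a), M₂(a)) = M̃(a) · F for all a ∈ Σ, where diag(M₁(a), M₂(a)) denotes the block-diagonal matrix with blocks M₁(a) and M₂(a). -/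

import Mathlib

open Matrix

noncomputable section

/-- The matrix `M(w)` of a word: `M(ε) = I`, `M(a₁⋯a_k) = M(a₁)⋯M(a_k)`. -/
def wordProd {S : Type*} {Γ : Type*} [Fintype S] [DecidableEq S]
    (M : Γ → Matrix S S ℝ) (w : List Γ) : Matrix S S ℝ :=
  (w.map M).prod

/-- The language of the weighted automaton `(M, α, η)`: `L(w) = α M(w) η`. -/
def WAlang {S : Type*} {Γ : Type*} [Fintype S] [DecidableEq S]
    (M : Γ → Matrix S S ℝ) (α η : S → ℝ) (w : List Γ) : ℝ :=
  α ⬝ᵥ (wordProd M w).mulVec η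

namespace PAaux

variable {n₁ n₂ : ℕ}

/-- The block diagonal matrix `diag(A, B)` as a matrix over `Fin (n₁ + n₂)`. -/
def Dm (A : Matrix (Fin n₁) (Fin n₁) ℝ) (B : Matrix (Fin n₂) (Fin n₂) ℝ) :
    Matrix (Fin (n₁ + n₂)) (Fin (n₁ + n₂)) ℝ :=
  (Matrix.fromBlocks A 0 0 B).submatrix finSumFinEquiv.symm finSumFinEquiv.symm

lemma append_eq_elim {α : Type*} (u : Fin n₁ → α) (v : Fin n₂ → α) :
    Fin.append u v = Sum.elim u v ∘ finSumFinEquiv.symm := by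
  funext i
  obtain ⟨j, rfl⟩ := finSumFinEquiv.surjective i
  rw [Function.comp_apply, Equiv.symm_apply_apply]
  cases j with
  | inl j => simp [finSumFinEquiv_apply_left]
  | inr j => simp [finSumFinEquiv_apply_right]

lemma vecMul_Dm (u : Fin n₁ → ℝ) (v : Fin n₂ → ℝ)
    (A : Matrix (Fin n₁) (Fin n₁) ℝ) (B : Matrix (Fin n₂) (Fin n₂) ℝ) :
    Fin.append u v ᵥ* Dm A B = Fin.append (u ᵥ* A) (v ᵥ* B) := by
  rw [append_eq_elim u v, append_eq_elim (u ᵥ* A) (v ᵥ* B), Dm, submatrix_vecMul_equiv]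
  rw [Equiv.symm_symm]
  have h1 : (Sum.elim u v ∘ ⇑finSumFinEquiv.symm) ∘ ⇑finSumFinEquiv = Sum.elim u v := by
    funext j; simp
  rw [h1, vecMul_fromBlocks]
  simp

lemma Dm_one : Dm (1 : Matrix (Fin n₁) (Fin n₁) ℝ) (1 : Matrix (Fin n₂) (Fin n₂) ℝ) = 1 := by
  rw [Dm, fromBlocks_one, submatrix_one_equiv]

lemma Dm_mul (A A' : Matrix (Fin n₁) (Fin n₁) ℝ) (B B' : Matrix (Fin n₂) (Fin n₂) ℝ) :
    Dm A B * Dm A' B' = Dm (A * A') (B * B') := by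
  rw [Dm, Dm, submatrix_mul_equiv, fromBlocks_multiply]
  simp [Dm]

lemma dot_append (u x : Fin n₁ → ℝ) (v y : Fin n₂ → ℝ) :
    Fin.append u v ⬝ᵥ Fin.append x y = u ⬝ᵥ x + v ⬝ᵥ y := by
  simp [dotProduct, Fin.sum_univ_add]

lemma row_mul {N : ℕ} (F M : Matrix (Fin N) (Fin N) ℝ) (i : Fin N) :
    (F * M) i = F i ᵥ* M := by
  funext j
  simp [mul_apply, vecMul, dotProduct]

lemma wordProd_nil {S Γ : Type*} [Fintype S] [DecidableEq S] (M : Γ → Matrix S S ℝ) :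
    wordProd M [] = 1 := by simp [wordProd]

lemma wordProd_cons {S Γ : Type*} [Fintype S] [DecidableEq S] (M : Γ → Matrix S S ℝ)
    (a : Γ) (w : List Γ) : wordProd M (a :: w) = M a * wordProd M w := by
  simp [wordProd]

lemma wordProd_snoc {S Γ : Type*} [Fintype S] [DecidableEq S] (M : Γ → Matrix S S ℝ)
    (a : Γ) (w : List Γ) : wordProd M (w ++ [a]) = wordProd M w * M a := by
  simp [wordProd]

end PAaux

open PAaux

/-- two PAs `A₁, A₂` are equivalent iff there are matrices
`M̃(a), F ∈ ℝ^{(n₁+n₂)×(n₁+n₂)}` such that the first row of `F` is `(α₁, α₂)`,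
`F (η₁ᵀ, −η₂ᵀ)ᵀ = 0`, and `F · diag(M₁(a), M₂(a)) = M̃(a) · F` for all `a`. -/
theorem PA_equivalence_iff_exists_F {Γ : Type*} {n₁ n₂ : ℕ}
    (M₁ : Γ → Matrix (Fin n₁) (Fin n₁) ℝ) (α₁ η₁ : Fin n₁ → ℝ)
    (M₂ : Γ → Matrix (Fin n₂) (Fin n₂) ℝ) (α₂ η₂ : Fin n₂ → ℝ)
    -- `A₁` is a PA:
    (hα₁ : ∀ i, 0 ≤ α₁ i) (hα₁s : ∑ i, α₁ i ≤ 1)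
    (hM₁ : ∀ a i j, 0 ≤ M₁ a i j) (hM₁s : ∀ a i, ∑ j, M₁ a i j ≤ 1)
    (hη₁ : ∀ i, η₁ i ∈ Set.Icc (0 : ℝ) 1)
    -- `A₂` is a PA:
    (hα₂ : ∀ i, 0 ≤ α₂ i) (hα₂s : ∑ i, α₂ i ≤ 1)
    (hM₂ : ∀ a i j, 0 ≤ M₂ a i j) (hM₂s : ∀ a i, ∑ j, M₂ a i j ≤ 1)
    (hη₂ : ∀ i, η₂ i ∈ Set.Icc (0 : ℝ) 1) :
    (∀ w : List Γ, WAlang M₂ α₂ η₂ w = WAlang M₁ α₁ η₁ w) ↔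
    (∃ (Mt : Γ → Matrix (Fin (n₁ + n₂)) (Fin (n₁ + n₂)) ℝ)
       (F : Matrix (Fin (n₁ + n₂)) (Fin (n₁ + n₂)) ℝ),
      (∀ i : Fin (n₁ + n₂), (i : ℕ) = 0 → F i = Fin.append α₁ α₂) ∧
      F.mulVec (Fin.append η₁ (fun i => -η₂ i)) = 0 ∧
      (∀ a, F * ((Matrix.fromBlocks (M₁ a) 0 0 (M₂ a)).submatrix
          finSumFinEquiv.symm finSumFinEquiv.symm) = Mt a * F)) := by
  classical
  set η' : Fin (n₁ + n₂) → ℝ := Fin.append η₁ (fun i => -η₂ i) with hη'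
  set g : List Γ → (Fin (n₁ + n₂) → ℝ) :=
    fun w => Fin.append (α₁ ᵥ* wordProd M₁ w) (α₂ ᵥ* wordProd M₂ w) with hg
  have g_eps : g [] = Fin.append α₁ α₂ := by
    simp [hg, wordProd_nil]
  have g_step : ∀ (w : List Γ) (a : Γ),
      g w ᵥ* Dm (M₁ a) (M₂ a) = g (w ++ [a]) := by
    intro w a
    simp only [hg, vecMul_Dm, wordProd_snoc]
    rw [vecMul_vecMul, vecMul_vecMul]
  have g_dot : ∀ w : List Γ,
      g w ⬝ᵥ η' = WAlang M₁ α₁ η₁ w - WAlang M₂ α₂ η₂ w := by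
    intro w
    rw [hg, hη', dot_append, WAlang, WAlang, dotProduct_mulVec, dotProduct_mulVec]
    simp [dotProduct, mul_comm]
    ring
  constructor
  · -- forward direction
    intro h
    by_cases h0 : (Fin.append α₁ α₂ : Fin (n₁ + n₂) → ℝ) = 0
    · refine ⟨fun _ => 0, 0, ?_, ?_, ?_⟩
      · intro i _
        rw [h0]; rfl
      · simp
      · intro a; simp
    · -- construct F from a basis of the reachable space
      set V : Submodule ℝ (Fin (n₁ + n₂) → ℝ) := Submodule.span ℝ (Set.range g) with hV
      have hgV : ∀ w, g w ∈ V := fun w => Submodule.subset_span ⟨w, rfl⟩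
      have hinv : ∀ a : Γ, ∀ v ∈ V, v ᵥ* Dm (M₁ a) (M₂ a) ∈ V := by
        intro a v hv
        have : V.map (Matrix.vecMulLinear (Dm (M₁ a) (M₂ a))) ≤ V := by
          rw [hV, Submodule.map_span, Submodule.span_le]
          rintro _ ⟨_, ⟨w, rfl⟩, rfl⟩
          rw [Matrix.vecMulLinear_apply, g_step w a]
          exact hgV (w ++ [a])
        exact this ⟨v, hv, rfl⟩
      have hdot : ∀ v ∈ V, v ⬝ᵥ η' = 0 := by
        let φ : (Fin (n₁ + n₂) → ℝ) →ₗ[ℝ] ℝ :=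
          { toFun := fun v : Fin (n₁ + n₂) → ℝ => v ⬝ᵥ η',
            map_add' := fun x y => add_dotProduct x y η',
            map_smul' := fun c x => smul_dotProduct c x η' }
        have hker : V ≤ LinearMap.ker φ := by
          rw [hV, Submodule.span_le]
          rintro _ ⟨w, rfl⟩
          simp only [SetLike.mem_coe, LinearMap.mem_ker, LinearMap.coe_mk, AddHom.coe_mk, φ]
          rw [g_dot w, h w]
          ring
        intro v hv
        exact hker hv
      -- extend {append α₁ α₂} to a linearly independent set b spanning V
      have hli : LinearIndependent ℝ
          (fun x : ({Fin.append α₁ α₂} : Set (Fin (n₁ + n₂) → ℝ)) =>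
            (x : Fin (n₁ + n₂) → ℝ)) :=
        (linearIndepOn_singleton_iff (R := ℝ) (v := id)).2 h0
      have hsub : ({Fin.append α₁ α₂} : Set (Fin (n₁ + n₂) → ℝ)) ⊆ Set.range g := by
        intro x hx
        rw [Set.mem_singleton_iff] at hx
        subst hx
        exact ⟨[], g_eps⟩
      obtain ⟨b, hbt, hsb, htb, hbli⟩ := exists_linearIndepOn_id_extension hli hsub
      have hbli : LinearIndependent ℝ (fun x : b => (x : Fin (n₁ + n₂) → ℝ)) := hbli
      have hbfin : b.Finite := hbli.setFinite
      haveI : Fintype b := hbfin.fintype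
      have hcard : Fintype.card b ≤ n₁ + n₂ := by
        have := hbli.fintype_card_le_finrank (R := ℝ) (M := Fin (n₁ + n₂) → ℝ)
        rwa [Module.finrank_fin_fun] at this
      have hmem : Fin.append α₁ α₂ ∈ b := hsb rfl
      -- enumeration of b with the distinguished vector first
      set e₀ : Fin (Fintype.card b) ≃ b := (Fintype.equivFin b).symm with he₀
      set i₀ : Fin (Fintype.card b) := e₀.symm ⟨Fin.append α₁ α₂, hmem⟩ with hi₀
      have cardpos : 0 < Fintype.card b := i₀.pos
      set e : Fin (Fintype.card b) ≃ b :=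
        (Equiv.swap (⟨0, cardpos⟩ : Fin (Fintype.card b)) i₀).trans e₀ with he
      have he0 : (e ⟨0, cardpos⟩ : Fin (n₁ + n₂) → ℝ) = Fin.append α₁ α₂ := by
        rw [he]
        simp [Equiv.swap_apply_left, hi₀]
      -- define F
      set F : Matrix (Fin (n₁ + n₂)) (Fin (n₁ + n₂)) ℝ :=
        Matrix.of (fun i => if hi : (i : ℕ) < Fintype.card b
          then ((e ⟨i, hi⟩ : b) : Fin (n₁ + n₂) → ℝ) else 0) with hF
      have hFdef : ∀ i : Fin (n₁ + n₂), F i = if hi : (i : ℕ) < Fintype.card b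
          then ((e ⟨i, hi⟩ : b) : Fin (n₁ + n₂) → ℝ) else 0 := by
        intro i; rw [hF]; rfl
      have hFrow : ∀ i, F i ∈ V := by
        intro i
        rw [hFdef i]
        by_cases hi : (i : ℕ) < Fintype.card b
        · rw [dif_pos hi]
          obtain ⟨w, hw⟩ := hbt (e ⟨i, hi⟩).2
          rw [← hw]; exact hgV w
        · rw [dif_neg hi]
          exact V.zero_mem
      have hbF : b ⊆ Set.range F := by
        intro x hx
        refine ⟨⟨(e.symm ⟨x, hx⟩ : ℕ), lt_of_lt_of_le (e.symm ⟨x, hx⟩).isLt hcard⟩, ?_⟩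
        have hlt : ((⟨(e.symm ⟨x, hx⟩ : ℕ), lt_of_lt_of_le (e.symm ⟨x, hx⟩).isLt hcard⟩ :
            Fin (n₁ + n₂)) : ℕ) < Fintype.card b := (e.symm ⟨x, hx⟩).isLt
        rw [hFdef, dif_pos hlt]
        have : (⟨((⟨(e.symm ⟨x, hx⟩ : ℕ), lt_of_lt_of_le (e.symm ⟨x, hx⟩).isLt hcard⟩ :
            Fin (n₁ + n₂)) : ℕ), hlt⟩ : Fin (Fintype.card b)) = e.symm ⟨x, hx⟩ := by
          apply Fin.ext; rfl
        rw [this, Equiv.apply_symm_apply]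
      have hVF : V ≤ Submodule.span ℝ (Set.range F) := by
        rw [hV, Submodule.span_le]
        intro x hx
        have : x ∈ Submodule.span ℝ b := htb hx
        exact Submodule.span_mono hbF (Submodule.span_le.2
          (fun y hy => Submodule.subset_span hy) this)
      -- choose the matrices Mt
      have hrow : ∀ (a : Γ) (i : Fin (n₁ + n₂)),
          ∃ c : Fin (n₁ + n₂) → ℝ, ∑ j, c j • F j = F i ᵥ* Dm (M₁ a) (M₂ a) := by
        intro a i
        exact (Submodule.mem_span_range_iff_exists_fun ℝ).1 (hVF (hinv a (F i) (hFrow i)))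
      choose c hc using hrow
      refine ⟨fun a => Matrix.of (fun i j => c a i j), F, ?_, ?_, ?_⟩
      · intro i hi
        have hlt : (i : ℕ) < Fintype.card b := by rw [hi]; exact cardpos
        rw [hFdef i, dif_pos hlt]
        have : (⟨(i : ℕ), hlt⟩ : Fin (Fintype.card b)) = ⟨0, cardpos⟩ := by
          apply Fin.ext; exact hi
        rw [this, he0]
      · funext i
        rw [Matrix.mulVec, Pi.zero_apply]
        exact hdot (F i) (hFrow i)
      · intro a
        have heq : ((Matrix.fromBlocks (M₁ a) 0 0 (M₂ a)).submatrix
            finSumFinEquiv.symm finSumFinEquiv.symm) = Dm (M₁ a) (M₂ a) := rfl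
        rw [heq]
        funext i j
        have h1 : (F * Dm (M₁ a) (M₂ a)) i j = (F i ᵥ* Dm (M₁ a) (M₂ a)) j := by
          rw [row_mul]
        rw [h1, ← hc a i]
        simp [Matrix.mul_apply, Finset.sum_apply]
  · -- backward direction
    rintro ⟨Mt, F, hF0, hFη, hcomm⟩ w
    rcases Nat.eq_zero_or_pos (n₁ + n₂) with hN | hN
    · obtain ⟨h1, h2⟩ := Nat.add_eq_zero.mp hN
      subst h1; subst h2
      simp [WAlang, dotProduct]
    · have hcomm' : ∀ a, F * Dm (M₁ a) (M₂ a) = Mt a * F := hcomm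
      have key : ∀ w : List Γ,
          F * Dm (wordProd M₁ w) (wordProd M₂ w) = wordProd Mt w * F := by
        intro w
        induction w with
        | nil => rw [wordProd_nil, wordProd_nil, wordProd_nil, Dm_one, mul_one, one_mul]
        | cons a w ih =>
          rw [wordProd_cons, wordProd_cons, wordProd_cons, ← Dm_mul, ← mul_assoc,
            hcomm' a, mul_assoc, ih, ← mul_assoc]
      set z : Fin (n₁ + n₂) := ⟨0, hN⟩ with hz
      have hFz : F z = Fin.append α₁ α₂ := hF0 z rfl
      have main : WAlang M₁ α₁ η₁ w - WAlang M₂ α₂ η₂ w = 0 := by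
        rw [← g_dot w]
        simp only [hg]
        have h1 : Fin.append (α₁ ᵥ* wordProd M₁ w) (α₂ ᵥ* wordProd M₂ w) =
            F z ᵥ* Dm (wordProd M₁ w) (wordProd M₂ w) := by
          rw [hFz, vecMul_Dm]
        rw [h1, ← row_mul, key w]
        have h2 : (wordProd Mt w * F) z ⬝ᵥ η' = ((wordProd Mt w * F) *ᵥ η') z := rfl
        rw [h2, ← Matrix.mulVec_mulVec, hη'] at *
        rw [hFη]
        simp
      linarith
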